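/- Let $\tilde{X} \subseteq \{1,\dots,k\}^{\mathbb{Z}}$ be the shift of finite type forbidding $aa$ and $(ab)^{\lambda_{ab}+1}$ for adjacent pairs $a,b$, and let $X \subseteq \tilde{X}$ be the subset of sequences that additionally contain no eventually periodic tail of the form $\overline{abc}$ (infinite repetition of a triple of labels sharing a vertex) in either direction. Then $X$ is dense in $\tilde{X}$, and $\tilde{X}$ is the closure of $X$ in the full shift. -/

import Mathlib

/-- The period-4 pattern `0123 0123 ⋯` as a function `ℤ → Fin 4`. -/
def pat (t : ℤ) : Fin 4 := ⟨(t % 4).toNat, by omega⟩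

lemma pat_ne (t r : ℤ) (h1 : 0 < r) (h2 : r < 4) : pat t ≠ pat (t + r) := by
  intro h
  have h3 : (t % 4).toNat = ((t + r) % 4).toNat := congrArg Fin.val h
  have h4 : t % 4 = (t + r) % 4 := by omega
  have h5 : (4 : ℤ) ∣ (t + r) - t := Int.ModEq.dvd h4
  have : (4:ℤ) ∣ r := by simpa using h5
  omega

lemma exists_phase {k : ℕ} (hk : 4 ≤ k) (a b : Fin k) (t : ℤ) :
    ∃ s : ℤ, Fin.castLE hk (pat (t + s)) ≠ a ∧ Fin.castLE hk (pat (t + s)) ≠ b := by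
  set f : ℤ → Fin k := fun s => Fin.castLE hk (pat (t + s)) with hf
  have hne : ∀ s r : ℤ, 0 < r → r < 4 → f s ≠ f (s + r) := by
    intro s r h1 h2 h
    exact pat_ne (t + s) r h1 h2 (by
      have := Fin.castLE_injective hk h
      rwa [show t + (s + r) = t + s + r by ring] at this)
  by_contra h
  push_neg at h
  have d01 : f 0 ≠ f 1 := by simpa using hne 0 1 one_pos (by norm_num)
  have d02 : f 0 ≠ f 2 := by simpa using hne 0 2 two_pos (by norm_num)
  have d12 : f 1 ≠ f 2 := by simpa using hne 1 1 one_pos (by norm_num)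
  have g0 : f 0 = a ∨ f 0 = b := or_iff_not_imp_left.mpr (h 0)
  have g1 : f 1 = a ∨ f 1 = b := or_iff_not_imp_left.mpr (h 1)
  have g2 : f 2 = a ∨ f 2 = b := or_iff_not_imp_left.mpr (h 2)
  rcases g0 with g0|g0 <;> rcases g1 with g1|g1 <;> rcases g2 with g2|g2 <;> subst_vars <;> simp_all

/-- `x` contains the alternating word `(ab)^m` starting at some index. -/
def ContainsAltWord {A : Type*} (x : ℤ → A) (a b : A) (m : ℕ) : Prop :=
  ∃ i : ℤ, ∀ j : ℕ, j < 2 * m → x (i + j) = (if Even j then a else b)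

/-- `x` has a forward tail `abc abc abc ⋯` : from some index on, `x` is the
periodic repetition of the word `abc`. -/
def HasFwdTail {A : Type*} (x : ℤ → A) (a b c : A) : Prop :=
  ∃ N : ℤ, ∀ m : ℕ,
    x (N + 3 * m) = a ∧ x (N + 3 * m + 1) = b ∧ x (N + 3 * m + 2) = c

/-- `x` has a backward tail `⋯ abc abc abc` : up to some index, `x` is the
periodic repetition of the word `abc`. -/
def HasBwdTail {A : Type*} (x : ℤ → A) (a b c : A) : Prop :=
  ∃ N : ℤ, ∀ m : ℕ,
    x (N - 3 * m) = a ∧ x (N - 3 * m + 1) = b ∧ x (N - 3 * m + 2) = c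

/-- Let `X̃ ⊆ {1,…,k}^ℤ` be the shift of finite type forbidding `aa` and
`(ab)^{λ_{ab}+1}` for adjacent pairs `a, b`, and let `X ⊆ X̃` be the subset of
sequences that additionally contain no eventually periodic tail `abc abc ⋯`
(for a vertex triple `a, b, c` of labels of faces sharing a vertex) in either
direction.  Then `X` is dense in `X̃` and `X̃` is the closure of `X` in the full
shift. -/
theorem code_space_closure
    (k : ℕ) (hk : 4 ≤ k)
    (Adj : Fin k → Fin k → Prop)
    (hsymm : ∀ a b, Adj a b → Adj b a) (hirr : ∀ a, ¬ Adj a a)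
    (lam : Fin k → Fin k → ℕ) (hlam : ∀ a b, Adj a b → 2 ≤ lam a b)
    (VT : Set (Fin k × Fin k × Fin k))
    (hVT : ∀ t ∈ VT, Adj t.1 t.2.1 ∧ Adj t.2.1 t.2.2 ∧ Adj t.1 t.2.2) :
    closure {x : ℤ → Fin k |
        ((∀ j : ℤ, x j ≠ x (j + 1)) ∧
          ∀ a b : Fin k, Adj a b → ¬ ContainsAltWord x a b (lam a b + 1)) ∧
        ∀ t ∈ VT, ¬ HasFwdTail x t.1 t.2.1 t.2.2 ∧
          ¬ HasBwdTail x t.1 t.2.1 t.2.2} =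
      {x : ℤ → Fin k |
        (∀ j : ℤ, x j ≠ x (j + 1)) ∧
        ∀ a b : Fin k, Adj a b → ¬ ContainsAltWord x a b (lam a b + 1)} := by
  set Xt : Set (ℤ → Fin k) := {x : ℤ → Fin k |
        (∀ j : ℤ, x j ≠ x (j + 1)) ∧
        ∀ a b : Fin k, Adj a b → ¬ ContainsAltWord x a b (lam a b + 1)} with hXt
  set X : Set (ℤ → Fin k) := {x : ℤ → Fin k |
        ((∀ j : ℤ, x j ≠ x (j + 1)) ∧
          ∀ a b : Fin k, Adj a b → ¬ ContainsAltWord x a b (lam a b + 1)) ∧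
        ∀ t ∈ VT, ¬ HasFwdTail x t.1 t.2.1 t.2.2 ∧
          ¬ HasBwdTail x t.1 t.2.1 t.2.2} with hX
  -- X̃ is closed
  have hclosed : IsClosed Xt := by
    have hA : IsClosed {x : ℤ → Fin k | ∀ j : ℤ, x j ≠ x (j + 1)} := by
      have : {x : ℤ → Fin k | ∀ j : ℤ, x j ≠ x (j + 1)} =
          ⋂ j : ℤ, {x : ℤ → Fin k | x j ≠ x (j + 1)} := by
        ext x; simp
      rw [this]
      refine isClosed_iInter fun j => ?_
      have hc : Continuous fun x : ℤ → Fin k => (x j, x (j + 1)) :=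
        (continuous_apply j).prodMk (continuous_apply (j + 1))
      have : {x : ℤ → Fin k | x j ≠ x (j + 1)} =
          (fun x : ℤ → Fin k => (x j, x (j + 1))) ⁻¹' {p : Fin k × Fin k | p.1 ≠ p.2} := rfl
      rw [this]
      exact (isClosed_discrete _).preimage hc
    have hB : IsClosed {x : ℤ → Fin k |
        ∀ a b : Fin k, Adj a b → ¬ ContainsAltWord x a b (lam a b + 1)} := by
      have : {x : ℤ → Fin k | ∀ a b : Fin k, Adj a b → ¬ ContainsAltWord x a b (lam a b + 1)} =
          ⋂ (a : Fin k) (b : Fin k) (_ : Adj a b),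
            {x : ℤ → Fin k | ContainsAltWord x a b (lam a b + 1)}ᶜ := by
        ext x; simp [Set.mem_iInter]
      rw [this]
      refine isClosed_iInter fun a => isClosed_iInter fun b => isClosed_iInter fun _ => ?_
      refine IsOpen.isClosed_compl ?_
      have : {x : ℤ → Fin k | ContainsAltWord x a b (lam a b + 1)} =
          ⋃ i : ℤ, ⋂ j ∈ Set.Iio (2 * (lam a b + 1)),
            {x : ℤ → Fin k | x (i + j) = (if Even j then a else b)} := by
        ext x
        simp only [Set.mem_setOf_eq, Set.mem_iUnion, Set.mem_iInter, Set.mem_Iio,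
          ContainsAltWord]
      rw [this]
      refine isOpen_iUnion fun i => ?_
      refine Set.Finite.isOpen_biInter (Set.finite_Iio _) fun j _ => ?_
      have : {x : ℤ → Fin k | x (i + j) = (if Even j then a else b)} =
          (fun x : ℤ → Fin k => x (i + j)) ⁻¹' {(if Even j then a else b)} := rfl
      rw [this]
      exact (isOpen_discrete _).preimage (continuous_apply _)
    exact hA.inter hB
  refine Set.Subset.antisymm (closure_minimal (fun z hz => hz.1) hclosed) ?_
  -- density direction
  intro x hx
  obtain ⟨hx1, hx2⟩ := hx
  -- the approximating sequences
  have main : ∀ m : ℕ, ∃ y : ℤ → Fin k,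
      (∀ j : ℤ, -((m:ℤ)+1) ≤ j → j ≤ (m:ℤ)+1 → y j = x j) ∧ y ∈ X := by
    intro m
    set M : ℤ := (m : ℤ) + 1 with hM
    have hM1 : 1 ≤ M := by omega
    obtain ⟨sR, hsR1, hsR2⟩ := exists_phase hk (x (M - 1)) (x M) (M + 1)
    obtain ⟨sL, hsL1, hsL2⟩ := exists_phase hk (x (-M + 1)) (x (-M)) (-M - 1)
    set v : ℤ → Fin k := fun t => Fin.castLE hk (pat t) with hv
    have vne : ∀ t r : ℤ, 0 < r → r < 4 → v t ≠ v (t + r) := by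
      intro t r h1 h2 h
      exact pat_ne t r h1 h2 (Fin.castLE_injective hk h)
    set y : ℤ → Fin k := fun j =>
      if j < -M then v (j + sL) else if j ≤ M then x j else v (j + sR) with hy
    have F0 : ∀ j : ℤ, -M ≤ j → j ≤ M → y j = x j := by
      intro j h1 h2
      simp only [hy]
      rw [if_neg (by omega), if_pos h2]
    have F1 : ∀ j : ℤ, M < j → y j = v (j + sR) := by
      intro j h1
      simp only [hy]
      rw [if_neg (by omega), if_neg (by omega)]
    have F2 : ∀ j : ℤ, j < -M → y j = v (j + sL) := by
      intro j h1
      simp only [hy]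
      rw [if_pos h1]
    refine ⟨y, fun j h1 h2 => F0 j h1 h2, ?_⟩
    have G1 : ∀ j : ℤ, y j ≠ y (j + 1) := by
      intro j
      by_cases c1 : j + 1 < -M
      · rw [F2 j (by omega), F2 (j+1) c1, show j + 1 + sL = j + sL + 1 by ring]
        exact vne (j + sL) 1 one_pos (by norm_num)
      · by_cases c2 : j < -M
        · have hj : j = -M - 1 := by omega
          rw [F2 j c2, F0 (j+1) (by omega) (by omega), hj,
            show -M - 1 + 1 = -M by ring]
          exact hsL2
        · by_cases c3 : j + 1 ≤ M
          · rw [F0 j (by omega) (by omega), F0 (j+1) (by omega) c3]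
            exact hx1 j
          · by_cases c4 : j ≤ M
            · have hj : j = M := by omega
              rw [hj, F0 M (by omega) le_rfl, F1 (M+1) (by omega)]
              exact fun h => hsR2 h.symm
            · rw [F1 j (by omega), F1 (j+1) (by omega),
                show j + 1 + sR = j + sR + 1 by ring]
              exact vne (j + sR) 1 one_pos (by norm_num)
    have G2 : ∀ a b : Fin k, Adj a b → ¬ ContainsAltWord y a b (lam a b + 1) := by
      intro a b hab ⟨i, hi⟩
      have hL : 2 ≤ lam a b := hlam a b hab
      have key : ∀ t1 t2 : ℤ, i ≤ t1 → t1 ≤ t2 → t2 < i + 2 * ((lam a b : ℤ) + 1) →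
          (t2 - t1) % 2 = 0 → y t1 = y t2 := by
        intro t1 t2 ha hb hc hd
        have e1 := hi (t1 - i).toNat (by omega)
        have e2 := hi (t2 - i).toNat (by omega)
        rw [show (i + ((t1 - i).toNat : ℤ)) = t1 by omega] at e1
        rw [show (i + ((t2 - i).toNat : ℤ)) = t2 by omega] at e2
        rw [e1, e2]
        simp only [Nat.even_iff]
        rw [show (t1 - i).toNat % 2 = (t2 - i).toNat % 2 by omega]
      by_cases h1 : M ≤ i
      · -- entirely in the right periodic region
        have e1 := hi 1 (by omega)
        have e3 := hi 3 (by omega)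
        norm_num [Nat.even_iff] at e1 e3
        rw [F1 (i+1) (by omega)] at e1
        rw [F1 (i+3) (by omega)] at e3
        exact vne (i + 1 + sR) 2 two_pos (by norm_num)
          (by rw [show i + 1 + sR + 2 = i + 3 + sR by ring, e1, e3])
      · by_cases h3 : i + 2 * ((lam a b : ℤ) + 1) - 1 ≤ M
        · by_cases h3c : -M ≤ i
          · -- entirely in the middle: contradiction with x ∈ X̃
            refine hx2 a b hab ⟨i, fun j hj => ?_⟩
            rw [← F0 (i + j) (by omega) (by omega)]
            exact hi j hj
          · by_cases h3b : -M + 1 ≤ i + 2 * ((lam a b : ℤ) + 1) - 1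
            · -- crosses the left boundary
              have e := key (-M - 1) (-M + 1) (by omega) (by omega) (by omega) (by norm_num)
              rw [F2 (-M-1) (by omega), F0 (-M+1) (by omega) (by omega)] at e
              exact hsL1 e
            · -- entirely in the left periodic region
              have e0 := hi 0 (by omega)
              have e2 := hi 2 (by omega)
              norm_num [Nat.even_iff] at e0 e2
              rw [F2 i (by omega)] at e0
              rw [F2 (i+2) (by omega)] at e2
              exact vne (i + sL) 2 two_pos (by norm_num)
                (by rw [show i + sL + 2 = i + 2 + sL by ring, e0, e2])
        · -- crosses the right boundary
          have e := key (M - 1) (M + 1) (by omega) (by omega) (by omega) (by norm_num)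
          rw [F0 (M-1) (by omega) (by omega), F1 (M+1) (by omega)] at e
          exact hsR1 e.symm
    have noFwd : ∀ a b c : Fin k, ¬ HasFwdTail y a b c := by
      rintro a b c ⟨N, hN⟩
      set m' : ℕ := (M + 1 - N).toNat with hm'
      have hgt : M < N + 3 * (m' : ℤ) := by omega
      have e1 := (hN m').1
      have e2 := (hN (m' + 1)).1
      rw [show ((m' + 1 : ℕ) : ℤ) = (m' : ℤ) + 1 by push_cast; ring,
        show N + 3 * ((m' : ℤ) + 1) = N + 3 * (m' : ℤ) + 3 by ring] at e2
      rw [F1 _ hgt] at e1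
      rw [F1 _ (by omega)] at e2
      exact vne (N + 3 * (m' : ℤ) + sR) 3 (by norm_num) (by norm_num)
        (by rw [e1, show N + 3 * (m' : ℤ) + sR + 3 = N + 3 * (m' : ℤ) + 3 + sR by ring, e2])
    have noBwd : ∀ a b c : Fin k, ¬ HasBwdTail y a b c := by
      rintro a b c ⟨N, hN⟩
      set m' : ℕ := (N + M + 1).toNat with hm'
      have hlt : N - 3 * (m' : ℤ) < -M := by omega
      have e1 := (hN m').1
      have e2 := (hN (m' + 1)).1
      rw [show ((m' + 1 : ℕ) : ℤ) = (m' : ℤ) + 1 by push_cast; ring,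
        show N - 3 * ((m' : ℤ) + 1) = N - 3 * (m' : ℤ) - 3 by ring] at e2
      rw [F2 _ hlt] at e1
      rw [F2 _ (by omega)] at e2
      exact vne (N - 3 * (m' : ℤ) - 3 + sL) 3 (by norm_num) (by norm_num)
        (by rw [e2, show N - 3 * (m' : ℤ) - 3 + sL + 3 = N - 3 * (m' : ℤ) + sL by ring, e1])
    exact ⟨⟨G1, G2⟩, fun t _ => ⟨noFwd _ _ _, noBwd _ _ _⟩⟩
  choose Y hY1 hY2 using main
  have hment : ∀ᶠ m in (Filter.atTop : Filter ℕ), Y m ∈ X :=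
    Filter.Eventually.of_forall hY2
  refine mem_closure_of_tendsto ?_ hment
  rw [tendsto_pi_nhds]
  intro j
  have hEv : ∀ᶠ m in Filter.atTop, (fun _ : ℕ => x j) m = Y m j := by
    refine Filter.eventually_atTop.mpr ⟨j.natAbs, fun m hm => ?_⟩
    exact (hY1 m j (by omega) (by omega)).symm
  exact Filter.Tendsto.congr' hEv tendsto_const_nhds
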